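/- arXiv:hep-th/0603011 — 2 statements merged into one kernel-verified Lean document; each statement's English description precedes it below -/
import Mathlib

section
/- Let g be a finite-dimensional real solvable Lie algebra of dimension n ≥ 1 with structure constants τ^I_{JK} in some basis, and define the Ricci matrix Ric^I_J = -(1/4)Tr(τ_I τ_J) - (1/4)Tr(τ_I τ_J^T) + (1/8)Σ_K (τ_K τ_K^T)^{IJ} - (1/4)Σ_K τ^I_{KJ} Tr(τ_K) + (1/4)Σ_K τ^K_{IJ} Tr(τ_K) - (1/4)Σ_K τ^J_{KI} Tr(τ_K), where (τ_I)^A_B = τ^A_{IB}. Then Ric is not positive definite. -/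
open Matrix

open scoped BigOperators

/-- The "Ricci matrix" built from structure constants `τ^A_{IB} = τ A I B`:
`Ric^I_J = -(1/4)Tr(τ_I τ_J) - (1/4)Tr(τ_I τ_Jᵀ) + (1/8)Σ_K (τ_K τ_Kᵀ)^{IJ}
 - (1/4)Σ_K τ^I_{KJ} Tr(τ_K) + (1/4)Σ_K τ^K_{IJ} Tr(τ_K) - (1/4)Σ_K τ^J_{KI} Tr(τ_K)`,
where `(τ_I)^A_B = τ^A_{IB}`. -/
noncomputable def RicciMatrix {n : ℕ} (τ : Fin n → Fin n → Fin n → ℝ) :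
    Matrix (Fin n) (Fin n) ℝ :=
  let t : Fin n → Matrix (Fin n) (Fin n) ℝ := fun I => Matrix.of fun A B => τ A I B
  Matrix.of fun I J =>
    -(1/4) * (t I * t J).trace - (1/4) * (t I * (t J)ᵀ).trace
      + (1/8) * ∑ K, (t K * (t K)ᵀ) I J
      - (1/4) * ∑ K, τ I K J * (t K).trace
      + (1/4) * ∑ K, τ K I J * (t K).trace
      - (1/4) * ∑ K, τ J K I * (t K).trace

lemma ricci_entry {n : ℕ} (τ : Fin n → Fin n → Fin n → ℝ) (I J : Fin n) :
    RicciMatrix τ I J =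
      -(1/4) * (∑ A, ∑ B, τ A I B * τ B J A)
      - (1/4) * (∑ A, ∑ B, τ A I B * τ A J B)
      + (1/8) * (∑ K, ∑ A, τ I K A * τ J K A)
      - (1/4) * (∑ K, ∑ A, τ I K J * τ A K A)
      + (1/4) * (∑ K, ∑ A, τ K I J * τ A K A)
      - (1/4) * (∑ K, ∑ A, τ J K I * τ A K A) := by
  simp [RicciMatrix, Matrix.trace, Matrix.mul_apply, Matrix.transpose_apply, Finset.mul_sum]

lemma sum_swap3 {n : ℕ} {β : Type*} [AddCommMonoid β] (g : Fin n → Fin n → Fin n → β) :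
    ∑ a, ∑ b, ∑ c, g a b c = ∑ b, ∑ c, ∑ a, g a b c := by
  rw [Finset.sum_comm]
  exact Finset.sum_congr rfl fun b _ => Finset.sum_comm

lemma sum_swap4 {n : ℕ} {β : Type*} [AddCommMonoid β] (f : Fin n → Fin n → Fin n → Fin n → β) :
    ∑ I, ∑ J, ∑ X, ∑ Y, f I J X Y = ∑ X, ∑ Y, ∑ I, ∑ J, f I J X Y := by
  calc ∑ I, ∑ J, ∑ X, ∑ Y, f I J X Y
      = ∑ I, ∑ X, ∑ Y, ∑ J, f I J X Y := Finset.sum_congr rfl fun I _ => sum_swap3 _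
    _ = ∑ X, ∑ Y, ∑ I, ∑ J, f I J X Y := sum_swap3 _

lemma quad_split {n : ℕ} (τ : Fin n → Fin n → Fin n → ℝ) (c : Fin n → ℝ) :
    c ⬝ᵥ (RicciMatrix τ).mulVec c = ∑ I, ∑ J, ∑ X, ∑ Y,
      ((c I * c J * (-(1/4))) * (τ X I Y * τ Y J X)
      + (c I * c J * (-(1/4))) * (τ X I Y * τ X J Y)
      + (c I * c J * (1/8)) * (τ I X Y * τ J X Y)
      + (c I * c J * (-(1/4))) * (τ I X J * τ Y X Y)
      + (c I * c J * (1/4)) * (τ X I J * τ Y X Y)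
      + (c I * c J * (-(1/4))) * (τ J X I * τ Y X Y)) := by
  simp only [dotProduct, Matrix.mulVec, Finset.mul_sum]
  refine Finset.sum_congr rfl fun I _ => Finset.sum_congr rfl fun J _ => ?_
  rw [ricci_entry]
  simp only [Finset.sum_add_distrib]
  simp only [← Finset.mul_sum]
  ring

lemma quad_nonpos {n : ℕ} (τ : Fin n → Fin n → Fin n → ℝ) (c : Fin n → ℝ)
    (hc : ∀ I J, ∑ K, c K * τ K I J = 0)
    (hanti : ∀ K I J, τ K J I = - τ K I J) :
    c ⬝ᵥ (RicciMatrix τ).mulVec c ≤ 0 := by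
  set M : Fin n → Fin n → ℝ := fun A B => ∑ I, c I * τ A I B with hM
  -- term 3 vanishes
  have hT3 : ∑ I, ∑ J, ∑ X, ∑ Y, (c I * c J * (1/8)) * (τ I X Y * τ J X Y) = 0 := by
    rw [sum_swap4]
    refine Finset.sum_eq_zero fun X _ => Finset.sum_eq_zero fun Y _ => ?_
    calc ∑ I, ∑ J, (c I * c J * (1/8)) * (τ I X Y * τ J X Y)
        = (∑ I, c I * τ I X Y) * ∑ J, (c J * (1/8)) * τ J X Y := by
          rw [Finset.sum_mul_sum]
          exact Finset.sum_congr rfl fun I _ => Finset.sum_congr rfl fun J _ => by ring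
      _ = 0 := by rw [hc X Y]; ring
  -- term 4 vanishes
  have hT4 : ∑ I, ∑ J, ∑ X, ∑ Y, (c I * c J * (-(1/4))) * (τ I X J * τ Y X Y) = 0 := by
    rw [sum_swap4]
    refine Finset.sum_eq_zero fun X _ => Finset.sum_eq_zero fun Y _ => ?_
    rw [Finset.sum_comm]
    refine Finset.sum_eq_zero fun J _ => ?_
    calc ∑ I, (c I * c J * (-(1/4))) * (τ I X J * τ Y X Y)
        = (∑ I, c I * τ I X J) * (c J * (-(1/4)) * τ Y X Y) := by
          rw [Finset.sum_mul]
          exact Finset.sum_congr rfl fun I _ => by ring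
      _ = 0 := by rw [hc X J]; ring
  -- term 5 vanishes by antisymmetry
  have hT5 : ∑ I, ∑ J, ∑ X, ∑ Y, (c I * c J * (1/4)) * (τ X I J * τ Y X Y) = 0 := by
    set f : Fin n → Fin n → ℝ := fun I J => ∑ X, ∑ Y, (c I * c J * (1/4)) * (τ X I J * τ Y X Y)
      with hf
    have key : ∀ I J, f I J = - f J I := by
      intro I J
      rw [hf]
      simp only
      rw [← Finset.sum_neg_distrib]
      refine Finset.sum_congr rfl fun X _ => ?_
      rw [← Finset.sum_neg_distrib]
      refine Finset.sum_congr rfl fun Y _ => ?_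
      rw [hanti X J I]
      ring
    have h2 : (∑ I, ∑ J, f I J) = - ∑ I, ∑ J, f I J := by
      conv_lhs => rw [Finset.sum_comm]
      calc ∑ J, ∑ I, f I J = ∑ J, ∑ I, -(f J I) := by
            exact Finset.sum_congr rfl fun J _ => Finset.sum_congr rfl fun I _ => key I J
        _ = - ∑ J, ∑ I, f J I := by simp [Finset.sum_neg_distrib]
    have h3 : (∑ I, ∑ J, f I J) = 0 := by linarith
    exact h3
  -- term 6 vanishes
  have hT6 : ∑ I, ∑ J, ∑ X, ∑ Y, (c I * c J * (-(1/4))) * (τ J X I * τ Y X Y) = 0 := by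
    rw [sum_swap4]
    refine Finset.sum_eq_zero fun X _ => Finset.sum_eq_zero fun Y _ => ?_
    refine Finset.sum_eq_zero fun I _ => ?_
    calc ∑ J, (c I * c J * (-(1/4))) * (τ J X I * τ Y X Y)
        = (∑ J, c J * τ J X I) * (c I * (-(1/4)) * τ Y X Y) := by
          rw [Finset.sum_mul]
          exact Finset.sum_congr rfl fun J _ => by ring
      _ = 0 := by rw [hc X I]; ring
  -- terms 1 and 2
  have hT1 : ∑ I, ∑ J, ∑ X, ∑ Y, (c I * c J * (-(1/4))) * (τ X I Y * τ Y J X)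
      = -(1/4) * ∑ X, ∑ Y, M X Y * M Y X := by
    rw [sum_swap4, Finset.mul_sum]
    refine Finset.sum_congr rfl fun X _ => ?_
    rw [Finset.mul_sum]
    refine Finset.sum_congr rfl fun Y _ => ?_
    rw [hM]
    simp only
    rw [Finset.sum_mul_sum]
    rw [Finset.mul_sum]
    refine Finset.sum_congr rfl fun I _ => ?_
    rw [Finset.mul_sum]
    exact Finset.sum_congr rfl fun J _ => by ring
  have hT2 : ∑ I, ∑ J, ∑ X, ∑ Y, (c I * c J * (-(1/4))) * (τ X I Y * τ X J Y)
      = -(1/4) * ∑ X, ∑ Y, M X Y * M X Y := by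
    rw [sum_swap4, Finset.mul_sum]
    refine Finset.sum_congr rfl fun X _ => ?_
    rw [Finset.mul_sum]
    refine Finset.sum_congr rfl fun Y _ => ?_
    rw [hM]
    simp only
    rw [Finset.sum_mul_sum]
    rw [Finset.mul_sum]
    refine Finset.sum_congr rfl fun I _ => ?_
    rw [Finset.mul_sum]
    exact Finset.sum_congr rfl fun J _ => by ring
  -- combine
  have hsum : c ⬝ᵥ (RicciMatrix τ).mulVec c
      = -(1/4) * (∑ X, ∑ Y, M X Y * M Y X) + -(1/4) * (∑ X, ∑ Y, M X Y * M X Y) := by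
    rw [quad_split]
    simp only [Finset.sum_add_distrib]
    rw [hT1, hT2, hT3, hT4, hT5, hT6]
    ring
  -- the square identity
  have hsq : ∑ X, ∑ Y, (M X Y + M Y X)^2
      = 2 * (∑ X, ∑ Y, M X Y * M Y X) + 2 * (∑ X, ∑ Y, M X Y * M X Y) := by
    have e1 : ∑ X, ∑ Y, M Y X * M Y X = ∑ X, ∑ Y, M X Y * M X Y := Finset.sum_comm
    have e2 : ∑ X, ∑ Y, (M X Y + M Y X)^2
        = ∑ X, ∑ Y, (M X Y * M X Y + 2 * (M X Y * M Y X) + M Y X * M Y X) :=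
      Finset.sum_congr rfl fun X _ => Finset.sum_congr rfl fun Y _ => by ring
    rw [e2]
    simp only [Finset.sum_add_distrib]
    rw [e1]
    simp only [← Finset.mul_sum]
    ring
  have hnn : 0 ≤ ∑ X, ∑ Y, (M X Y + M Y X)^2 :=
    Finset.sum_nonneg fun X _ => Finset.sum_nonneg fun Y _ => sq_nonneg _
  rw [hsum]
  nlinarith [hsq, hnn]

/-- For a real solvable Lie algebra of dimension `n ≥ 1` with structure constants
`τ^K_{IJ}` in some basis (`⁅b I, b J⁆ = Σ_K τ^K_{IJ} b K`), the Ricci matrix is not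
positive definite. -/
theorem ricci_not_posDef_of_solvable
    (n : ℕ) (hn : 1 ≤ n)
    (L : Type) [LieRing L] [LieAlgebra ℝ L] [LieAlgebra.IsSolvable L]
    (b : Module.Basis (Fin n) ℝ L)
    (τ : Fin n → Fin n → Fin n → ℝ)
    (hτ : ∀ I J : Fin n, ⁅b I, b J⁆ = ∑ K, τ K I J • b K) :
    ¬ (RicciMatrix τ).PosDef := by
  intro hPD
  -- L is nontrivial
  have hnt : Nontrivial L := by
    refine nontrivial_of_ne (b ⟨0, hn⟩) 0 (b.ne_zero _)
  -- the derived ideal is proper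
  have hlt : LieAlgebra.derivedSeries ℝ L 1 < ⊤ := LieAlgebra.derivedSeries_lt_top_of_solvable ℝ L
  set p : Submodule ℝ L := (LieAlgebra.derivedSeries ℝ L 1).toSubmodule with hp
  have hplt : p < ⊤ := by
    rw [lt_top_iff_ne_top]
    intro h
    rw [lt_top_iff_ne_top] at hlt
    apply hlt
    rw [← LieSubmodule.toSubmodule_eq_top]
    simpa [hp] using h
  obtain ⟨f, hf0, hfmap⟩ := p.exists_dual_map_eq_bot_of_lt_top hplt inferInstance
  have hfp : ∀ x ∈ p, f x = 0 := by
    intro x hx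
    have : f x ∈ p.map f := Submodule.mem_map_of_mem hx
    rw [hfmap] at this
    simpa using this
  -- bracket lies in derived ideal
  have hbr : ∀ x y : L, f ⁅x, y⁆ = 0 := by
    intro x y
    apply hfp
    rw [hp]
    have : ⁅x, y⁆ ∈ LieAlgebra.derivedSeries ℝ L 1 := by
      rw [LieAlgebra.derivedSeries_def, LieAlgebra.derivedSeriesOfIdeal_succ,
        LieAlgebra.derivedSeriesOfIdeal_zero]
      exact LieSubmodule.lie_mem_lie (LieSubmodule.mem_top x) (LieSubmodule.mem_top y)
    exact this
  set c : Fin n → ℝ := fun K => f (b K) with hcdef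
  have hcne : c ≠ 0 := by
    intro h
    apply hf0
    apply b.ext
    intro K
    have := congrFun h K
    simpa [hcdef] using this
  have hc : ∀ I J, ∑ K, c K * τ K I J = 0 := by
    intro I J
    have := hbr (b I) (b J)
    rw [hτ I J] at this
    rw [map_sum] at this
    simpa [hcdef, mul_comm] using this
  have hanti : ∀ K I J, τ K J I = - τ K I J := by
    intro K I J
    have h1 : (∑ X, τ X J I • b X) = ∑ X, (- τ X I J) • b X := by
      rw [← hτ J I, ← lie_skew, hτ I J, ← Finset.sum_neg_distrib]
      exact Finset.sum_congr rfl fun X _ => (neg_smul _ _).symm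
    have h3 : (fun X => τ X J I) = (fun X => -τ X I J) := by
      calc (fun X => τ X J I) = ⇑(b.repr (∑ X, τ X J I • b X)) := (b.repr_sum_self _).symm
        _ = ⇑(b.repr (∑ X, (-τ X I J) • b X)) := by rw [h1]
        _ = fun X => -τ X I J := b.repr_sum_self _
    exact congrFun h3 K
  have := hPD.dotProduct_mulVec_pos hcne
  have hle := quad_nonpos τ c hc hanti
  rw [show (star c) = c from rfl] at this
  linarith
end

section
/- Consider the 7-dimensional real Lie algebra with basis J_1,J_2,J_3,W_1,W_2,W_3,Z and brackets [J_x,J_y]=ε_{xyz}J_z, [J_x,W_y]=ε_{xyz}W_z, [J_x,Z]=0, [W_x,W_y]=0, [Z,W_x]=γ W_x (for a real parameter γ). Its Ricci matrix, computed from the structure constants by Ric^I_J = -(1/4)Tr(τ_I τ_J) - (1/4)Tr(τ_I τ_J^T) + (1/8)Σ_K(τ_K τ_K^T)^{IJ} - (1/4)Σ_K τ^I_{KJ}Tr(τ_K) + (1/4)Σ_K τ^K_{IJ}Tr(τ_K) - (1/4)Σ_K τ^J_{KI}Tr(τ_K), equals diag(1/4, 1/4, 1/4, -3γ²/2, -3γ²/2,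 -3γ²/2, -3γ²/2). In particular, it is never positive definite. -/
open Matrix

open scoped BigOperators

/-- The Jacobi identity for structure constants `τ^K_{IJ} = τ K I J`. -/
def JacobiId {n : ℕ} (τ : Fin n → Fin n → Fin n → ℝ) : Prop :=
  ∀ I J K M : Fin n,
    ∑ L, (τ M L K * τ L I J + τ M L I * τ L J K + τ M L J * τ L K I) = 0

/-- The Levi-Civita symbol on three indices `0,1,2` (as naturals), `ε_{012} = 1`. -/
noncomputable def epsN (x y z : ℕ) : ℝ :=
  (((x : ℝ) - y) * ((y : ℝ) - z) * ((z : ℝ) - x)) / 2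

/-- Structure constants `τ^A_{IB}` of the algebra `so3w3+1` in the ordered basis
`(J₁,J₂,J₃,W₁,W₂,W₃,Z)`: `[J_x,J_y]=ε_{xyz}J_z`, `[J_x,W_y]=ε_{xyz}W_z`,
`[J_x,Z]=0`, `[W_x,W_y]=0`, `[Z,W_x]=γ W_x`. -/
noncomputable def tauSO3W31 (g : ℝ) : Fin 7 → Fin 7 → Fin 7 → ℝ := fun A I B =>
  if A.1 < 3 ∧ I.1 < 3 ∧ B.1 < 3 then epsN I.1 B.1 A.1
  else if I.1 < 3 ∧ 3 ≤ B.1 ∧ B.1 < 6 ∧ 3 ≤ A.1 ∧ A.1 < 6 then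
    epsN I.1 (B.1 - 3) (A.1 - 3)
  else if 3 ≤ I.1 ∧ I.1 < 6 ∧ B.1 < 3 ∧ 3 ≤ A.1 ∧ A.1 < 6 then
    -epsN B.1 (I.1 - 3) (A.1 - 3)
  else if I.1 = 6 ∧ 3 ≤ B.1 ∧ B.1 < 6 ∧ A = B then g
  else if 3 ≤ I.1 ∧ I.1 < 6 ∧ B.1 = 6 ∧ A = I then -g
  else 0

/-! ### Auxiliary integer structure constants and computations -/

/-- Integer Levi-Civita symbol. -/
def epsZ (x y z : ℕ) : ℤ := (((x:ℤ) - y) * ((y:ℤ) - z) * ((z:ℤ) - x)) / 2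

/-- The `g`-independent part of the structure constants, over `ℤ`. -/
def c0 : Fin 7 → Fin 7 → Fin 7 → ℤ := fun A I B =>
  if A.1 < 3 ∧ I.1 < 3 ∧ B.1 < 3 then epsZ I.1 B.1 A.1
  else if I.1 < 3 ∧ 3 ≤ B.1 ∧ B.1 < 6 ∧ 3 ≤ A.1 ∧ A.1 < 6 then
    epsZ I.1 (B.1 - 3) (A.1 - 3)
  else if 3 ≤ I.1 ∧ I.1 < 6 ∧ B.1 < 3 ∧ 3 ≤ A.1 ∧ A.1 < 6 then
    -epsZ B.1 (I.1 - 3) (A.1 - 3)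
  else if I.1 = 6 ∧ 3 ≤ B.1 ∧ B.1 < 6 ∧ A = B then 0
  else if 3 ≤ I.1 ∧ I.1 < 6 ∧ B.1 = 6 ∧ A = I then 0
  else 0

/-- The coefficient of `g` in the structure constants, over `ℤ`. -/
def c1 : Fin 7 → Fin 7 → Fin 7 → ℤ := fun A I B =>
  if A.1 < 3 ∧ I.1 < 3 ∧ B.1 < 3 then 0
  else if I.1 < 3 ∧ 3 ≤ B.1 ∧ B.1 < 6 ∧ 3 ≤ A.1 ∧ A.1 < 6 then 0
  else if 3 ≤ I.1 ∧ I.1 < 6 ∧ B.1 < 3 ∧ 3 ≤ A.1 ∧ A.1 < 6 then 0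
  else if I.1 = 6 ∧ 3 ≤ B.1 ∧ B.1 < 6 ∧ A = B then 1
  else if 3 ≤ I.1 ∧ I.1 < 6 ∧ B.1 = 6 ∧ A = I then -1
  else 0

/-- Explicit sum over `Fin 7`. -/
def sum7 (f : Fin 7 → ℤ) : ℤ := f 0 + f 1 + f 2 + f 3 + f 4 + f 5 + f 6

lemma epsN_eq (a b c : ℕ) : epsN a b c = ((epsZ a b c : ℤ) : ℝ) := by
  have hdvd : (2:ℤ) ∣ (((a:ℤ) - b) * ((b:ℤ) - c) * ((c:ℤ) - a)) := by
    rcases Int.even_or_odd ((a:ℤ) - b) with h | h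
    · exact Dvd.dvd.mul_right (Dvd.dvd.mul_right h.two_dvd _) _
    · rcases Int.even_or_odd ((b:ℤ) - c) with h2 | h2
      · exact Dvd.dvd.mul_right (Dvd.dvd.mul_left h2.two_dvd _) _
      · have : Even ((c:ℤ) - a) := by
          have := h.add_odd h2
          have he : ((a:ℤ) - b) + ((b:ℤ) - c) = -((c:ℤ) - a) := by ring
          rw [he] at this
          exact even_neg.mp this
        exact Dvd.dvd.mul_left this.two_dvd _
  obtain ⟨k, hk⟩ := hdvd
  unfold epsN epsZ
  rw [hk]
  rw [Int.mul_ediv_cancel_left _ (by norm_num)]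
  have : ((a:ℝ) - b) * ((b:ℝ) - c) * ((c:ℝ) - a) = ((2 * k : ℤ) : ℝ) := by
    push_cast
    have := congrArg (fun z : ℤ => (z : ℝ)) hk
    push_cast at this
    linarith [this]
  rw [this]
  push_cast
  ring

lemma tau_split (g : ℝ) (A I B : Fin 7) :
    tauSO3W31 g A I B = ((c0 A I B : ℤ) : ℝ) + ((c1 A I B : ℤ) : ℝ) * g := by
  unfold tauSO3W31 c0 c1
  split_ifs <;> simp [epsN_eq]

theorem jac0 : ∀ I J K M : Fin 7,
    sum7 (fun L => c0 M L K * c0 L I J + c0 M L I * c0 L J K + c0 M L J * c0 L K I) = 0 := by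
  decide

theorem jac1 : ∀ I J K M : Fin 7,
    sum7 (fun L => c0 M L K * c1 L I J + c1 M L K * c0 L I J
      + c0 M L I * c1 L J K + c1 M L I * c0 L J K
      + c0 M L J * c1 L K I + c1 M L J * c0 L K I) = 0 := by
  decide

theorem jac2 : ∀ I J K M : Fin 7,
    sum7 (fun L => c1 M L K * c1 L I J + c1 M L I * c1 L J K + c1 M L J * c1 L K I) = 0 := by
  decide

/-- Integer trace. -/
def trc (a : Fin 7 → Fin 7 → Fin 7 → ℤ) (K : Fin 7) : ℤ := sum7 (fun A => a A K A)

/-- The Ricci bilinear form (times 8), over `ℤ`. -/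
def BilZ (a b : Fin 7 → Fin 7 → Fin 7 → ℤ) (I J : Fin 7) : ℤ :=
  -2 * sum7 (fun A => sum7 (fun B => a A I B * b B J A))
  - 2 * sum7 (fun A => sum7 (fun B => a A I B * b A J B))
  + sum7 (fun K => sum7 (fun B => a I K B * b J K B))
  - 2 * sum7 (fun K => a I K J * trc b K)
  + 2 * sum7 (fun K => a K I J * trc b K)
  - 2 * sum7 (fun K => a J K I * trc b K)

theorem ric0 : ∀ I J : Fin 7, BilZ c0 c0 I J = if I = J ∧ I.1 < 3 then 2 else 0 := by decide
theorem ric1 : ∀ I J : Fin 7, BilZ c0 c1 I J + BilZ c1 c0 I J = 0 := by decide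
theorem ric2 : ∀ I J : Fin 7, BilZ c1 c1 I J = if I = J ∧ 3 ≤ I.1 then -12 else 0 := by decide

set_option maxHeartbeats 4000000 in
lemma ricci_key (g : ℝ) (I J : Fin 7) :
    RicciMatrix (tauSO3W31 g) I J = (1/8) * (((BilZ c0 c0 I J : ℤ) : ℝ)
      + ((BilZ c0 c1 I J + BilZ c1 c0 I J : ℤ) : ℝ) * g
      + ((BilZ c1 c1 I J : ℤ) : ℝ) * g^2) := by
  simp only [RicciMatrix, Matrix.trace, Matrix.diag, Matrix.mul_apply,
    Matrix.transpose_apply, Matrix.of_apply, Fin.sum_univ_seven, tau_split,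
    BilZ, trc, sum7]
  push_cast
  ring

/-- The algebra `so3w3+1` is a Lie algebra and its Ricci matrix is
`diag(1/4, 1/4, 1/4, -3γ²/2, -3γ²/2, -3γ²/2, -3γ²/2)`; in particular it is never
positive definite. -/
theorem ricci_so3w31 (g : ℝ) :
    JacobiId (tauSO3W31 g) ∧
    RicciMatrix (tauSO3W31 g) =
      Matrix.diagonal
        ![1/4, 1/4, 1/4, -3*g^2/2, -3*g^2/2, -3*g^2/2, -3*g^2/2] ∧
    ¬ (RicciMatrix (tauSO3W31 g)).PosDef := by
  have heq : RicciMatrix (tauSO3W31 g) =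
      Matrix.diagonal
        ![1/4, 1/4, 1/4, -3*g^2/2, -3*g^2/2, -3*g^2/2, -3*g^2/2] := by
    ext I J
    rw [ricci_key g I J, ric0 I J, ric1 I J, ric2 I J, Matrix.diagonal_apply]
    rcases eq_or_ne I J with rfl | h
    · fin_cases I <;> norm_num <;> ring
    · simp [h]
  refine ⟨?_, heq, ?_⟩
  · intro I J K M
    have h0 : ((sum7 (fun L => c0 M L K * c0 L I J + c0 M L I * c0 L J K
        + c0 M L J * c0 L K I) : ℤ) : ℝ) = 0 := by rw [jac0]; norm_num
    have h1 : ((sum7 (fun L => c0 M L K * c1 L I J + c1 M L K * c0 L I J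
        + c0 M L I * c1 L J K + c1 M L I * c0 L J K
        + c0 M L J * c1 L K I + c1 M L J * c0 L K I) : ℤ) : ℝ) = 0 := by rw [jac1]; norm_num
    have h2 : ((sum7 (fun L => c1 M L K * c1 L I J + c1 M L I * c1 L J K
        + c1 M L J * c1 L K I) : ℤ) : ℝ) = 0 := by rw [jac2]; norm_num
    simp only [sum7] at h0 h1 h2
    push_cast at h0 h1 h2
    simp only [Fin.sum_univ_seven, tau_split]
    linear_combination h0 + g * h1 + g^2 * h2
  · rw [heq, Matrix.posDef_diagonal_iff]
    intro h
    have h3 := h 3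
    change (0:ℝ) < -3*g^2/2 at h3
    norm_num at h3
    nlinarith [sq_nonneg g]
end
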